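/- For every d̄ ≥ 1 there exists ε₀ ∈ (0,1) such that for every ε ∈ (0,ε₀] and every δ ∈ (0,1) there exists n₀ ∈ ℕ such that the following holds for every n ≥ n₀. Let D be a feasible degree sequence on V = [n] with Σ^D ≤ d̄n, set S₁ := {u ∈ V : d(u) ≥ (log n)²} and S₃ := {u ∈ V : d(u) ≥ n^{4/5}}, and assume Σ_{u∈S₁} d(u) ≥ εn and Σ_{u∈S₃} d(u) < εn/10. Then the probability that there exists a vertex u ∈ S₁ whose degree in the induced subgraph G^D[S₁] is at most min{d(u), n^{1/6}}·ε/(16d̄) is at most δ. -/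

import Mathlib

open Finset

noncomputable section
open scoped Classical

/-- The finset of all simple graphs on `Fin n` realising the degree sequence `D`
(vertex `v` has degree `D v`). -/
def graphsWithDegreeSeq (n : ℕ) (D : Fin n → ℕ) : Finset (SimpleGraph (Fin n)) :=
  Finset.univ.filter (fun G => ∀ v, G.degree v = D v)

/-- Probability of `A` under the uniform distribution on simple graphs with degree
sequence `D`. -/
def uniformProb (n : ℕ) (D : Fin n → ℕ) (A : SimpleGraph (Fin n) → Prop) : ℝ :=
  (((graphsWithDegreeSeq n D).filter A).card : ℝ) / ((graphsWithDegreeSeq n D).card : ℝ)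

variable {n : ℕ}

def swG (G : SimpleGraph (Fin n)) (u w x y : Fin n) : SimpleGraph (Fin n) :=
  SimpleGraph.fromEdgeSet ((G.edgeSet \ {s(u,w), s(x,y)}) ∪ {s(u,x), s(w,y)})

lemma swG_adj (G : SimpleGraph (Fin n)) (u w x y a b : Fin n) :
    (swG G u w x y).Adj a b ↔
      (((G.Adj a b ∧ ¬(s(a,b) = s(u,w)) ∧ ¬(s(a,b) = s(x,y))) ∨ s(a,b) = s(u,x) ∨ s(a,b) = s(w,y)) ∧ a ≠ b) := by
  rw [swG, SimpleGraph.fromEdgeSet_adj]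
  simp only [Set.mem_union, Set.mem_diff, Set.mem_insert_iff, Set.mem_singleton_iff,
    SimpleGraph.mem_edgeSet]
  tauto

lemma swG_comm1 (G : SimpleGraph (Fin n)) (u w x y : Fin n) :
    swG G u w x y = swG G x y u w := by
  unfold swG
  rw [Set.pair_comm (s(x,y)) (s(u,w)),
    show (s(x,u) : Sym2 (Fin n)) = s(u,x) from Sym2.eq_swap,
    show (s(y,w) : Sym2 (Fin n)) = s(w,y) from Sym2.eq_swap]

lemma swG_comm2 (G : SimpleGraph (Fin n)) (u w x y : Fin n) :
    swG G u w x y = swG G w u y x := by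
  unfold swG
  rw [show (s(w,u) : Sym2 (Fin n)) = s(u,w) from Sym2.eq_swap,
    show (s(y,x) : Sym2 (Fin n)) = s(x,y) from Sym2.eq_swap,
    Set.pair_comm (s(w,y)) (s(u,x))]

structure SwCond (G : SimpleGraph (Fin n)) (u w x y : Fin n) : Prop where
  auw : G.Adj u w
  axy : G.Adj x y
  nux : ¬ G.Adj u x
  nwy : ¬ G.Adj w y
  hux : u ≠ x
  huy : u ≠ y
  hwx : w ≠ x
  hwy : w ≠ y

namespace SwCond

variable {G : SimpleGraph (Fin n)} {u w x y : Fin n}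

lemma symm1 (h : SwCond G u w x y) : SwCond G x y u w :=
  ⟨h.axy, h.auw, fun a => h.nux a.symm, fun a => h.nwy a.symm,
   h.hux.symm, h.hwx.symm, h.huy.symm, h.hwy.symm⟩

lemma symm2 (h : SwCond G u w x y) : SwCond G w u y x :=
  ⟨h.auw.symm, h.axy.symm, fun a => h.nwy a, fun a => h.nux a,
   h.hwy, h.hwx, h.huy, h.hux⟩

lemma nb_u (h : SwCond G u w x y) :
    (swG G u w x y).neighborFinset u = insert x ((G.neighborFinset u).erase w) := by
  have h1 := h.auw; have h2 := h.axy; have h3 := h.nux; have h4 := h.nwy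
  have h5 := h.hux; have h6 := h.huy; have h7 := h.hwx; have h8 := h.hwy
  have h9 : u ≠ w := h1.ne; have h10 : x ≠ y := h2.ne
  ext b
  simp only [SimpleGraph.mem_neighborFinset, swG_adj, Sym2.eq_iff, mem_insert, mem_erase]
  constructor
  · intro hb
    aesop
  · intro hb
    rcases hb with rfl | ⟨hbw, hab⟩
    · exact ⟨Or.inr (Or.inl (by simp)), h5⟩
    · exact ⟨Or.inl ⟨hab, by aesop, by aesop⟩, hab.ne⟩

lemma nb_x (h : SwCond G u w x y) :
    (swG G u w x y).neighborFinset x = insert u ((G.neighborFinset x).erase y) := by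
  rw [swG_comm1]; exact h.symm1.nb_u

lemma nb_w (h : SwCond G u w x y) :
    (swG G u w x y).neighborFinset w = insert y ((G.neighborFinset w).erase u) := by
  rw [swG_comm2]; exact h.symm2.nb_u

lemma nb_y (h : SwCond G u w x y) :
    (swG G u w x y).neighborFinset y = insert w ((G.neighborFinset y).erase x) := by
  rw [swG_comm2]; exact h.symm2.nb_x

lemma nb_other (h : SwCond G u w x y) {v : Fin n} (hvu : v ≠ u) (hvw : v ≠ w)
    (hvx : v ≠ x) (hvy : v ≠ y) :
    (swG G u w x y).neighborFinset v = G.neighborFinset v := by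
  ext b
  simp only [SimpleGraph.mem_neighborFinset, swG_adj, Sym2.eq_iff]
  constructor
  · intro hb; aesop
  · intro hb
    exact ⟨Or.inl ⟨hb, by aesop, by aesop⟩, hb.ne⟩

end SwCond

lemma not_mem_erase_of {α : Type*} [DecidableEq α] {s : Finset α} {a b : α} (hb : b ∉ s) :
    b ∉ s.erase a := fun hc => hb (mem_of_mem_erase hc)

lemma card_insert_erase {α : Type*} [DecidableEq α] {s : Finset α} {a b : α} (ha : a ∈ s) (hb : b ∉ s) :
    (insert b (s.erase a)).card = s.card := by
  have h0 : 0 < s.card := card_pos.mpr ⟨a, ha⟩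
  rw [card_insert_of_notMem (fun hc => hb (mem_of_mem_erase hc)), card_erase_of_mem ha]
  omega

namespace SwCond

variable {G : SimpleGraph (Fin n)} {u w x y : Fin n}

lemma degree_eq (h : SwCond G u w x y) (v : Fin n) :
    (swG G u w x y).degree v = G.degree v := by
  have h9 : u ≠ w := h.auw.ne; have h10 : x ≠ y := h.axy.ne
  simp only [← SimpleGraph.card_neighborFinset_eq_degree]
  by_cases hvu : v = u
  · subst hvu
    rw [h.nb_u, card_insert_erase (by simpa using h.auw) (by simpa using h.nux)]
  by_cases hvw : v = w
  · subst hvw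
    rw [h.nb_w, card_insert_erase (by simpa using h.auw.symm) (by simpa using fun a => h.nwy a)]
  by_cases hvx : v = x
  · subst hvx
    rw [h.nb_x, card_insert_erase (by simpa using h.axy) (by simpa using fun a => h.nux a.symm)]
  by_cases hvy : v = y
  · subst hvy
    rw [h.nb_y, card_insert_erase (by simpa using h.axy.symm) (by simpa using fun a => h.nwy a.symm)]
  rw [h.nb_other hvu hvw hvx hvy]

lemma rev (h : SwCond G u w x y) : SwCond (swG G u w x y) u x w y := by
  have h9 : u ≠ w := h.auw.ne; have h10 : x ≠ y := h.axy.ne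
  refine ⟨?_, ?_, ?_, ?_, h9, h.huy, h.hwx.symm, h10⟩
  · rw [← SimpleGraph.mem_neighborFinset, h.nb_u]; exact mem_insert_self _ _
  · rw [← SimpleGraph.mem_neighborFinset, h.nb_w]; exact mem_insert_self _ _
  · rw [← SimpleGraph.mem_neighborFinset, h.nb_u]
    simp [h.hwx]
  · rw [← SimpleGraph.mem_neighborFinset, h.nb_x]
    simp [h.huy.symm]

lemma swG_swG (h : SwCond G u w x y) : swG (swG G u w x y) u x w y = G := by
  have h9 : u ≠ w := h.auw.ne; have h10 : x ≠ y := h.axy.ne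
  have h' := h.rev
  have hN : ∀ v, (swG (swG G u w x y) u x w y).neighborFinset v = G.neighborFinset v := by
    intro v
    by_cases hvu : v = u
    · subst hvu
      rw [h'.nb_u, h.nb_u, erase_insert (not_mem_erase_of (by simpa using h.nux)),
        insert_erase (by simpa using h.auw)]
    by_cases hvx : v = x
    · subst hvx
      rw [h'.nb_w, h.nb_x, erase_insert (not_mem_erase_of (by simpa using fun a => h.nux a.symm)),
        insert_erase (by simpa using h.axy)]
    by_cases hvw : v = w
    · subst hvw
      rw [h'.nb_x, h.nb_w, erase_insert (not_mem_erase_of (by simpa using fun a => h.nwy a)),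
        insert_erase (by simpa using h.auw.symm)]
    by_cases hvy : v = y
    · subst hvy
      rw [h'.nb_y, h.nb_y, erase_insert (not_mem_erase_of (by simpa using fun a => h.nwy a.symm)),
        insert_erase (by simpa using h.axy.symm)]
    rw [h'.nb_other hvu hvx hvw hvy, h.nb_other hvu hvw hvx hvy]
  ext a b
  rw [← SimpleGraph.mem_neighborFinset, ← SimpleGraph.mem_neighborFinset, hN]

end SwCond

lemma indicator_and (p q : Prop) :
    (if (p ∧ q) then (1:ℕ) else 0) = (if p then 1 else 0) * (if q then 1 else 0) := by
  by_cases hp : p <;> by_cases hq : q <;> simp [hp, hq]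

lemma codeg_swap (G : SimpleGraph (Fin n)) (A X : Finset (Fin n)) :
    ∑ w ∈ A, ∑ x ∈ X, (G.neighborFinset w ∩ G.neighborFinset x).card
      = ∑ z : Fin n,
          (A.filter (fun w => G.Adj w z)).card * (X.filter (fun x => G.Adj x z)).card := by
  have h1 : ∀ w x : Fin n, (G.neighborFinset w ∩ G.neighborFinset x)
      = univ.filter (fun z => G.Adj w z ∧ G.Adj x z) := by
    intro w x; ext z; simp [SimpleGraph.mem_neighborFinset]
  simp only [h1, card_filter, indicator_and]
  calc ∑ w ∈ A, ∑ x ∈ X, ∑ z : Fin n,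
          (if G.Adj w z then (1:ℕ) else 0) * (if G.Adj x z then 1 else 0)
      = ∑ w ∈ A, ∑ z : Fin n, ∑ x ∈ X,
          (if G.Adj w z then (1:ℕ) else 0) * (if G.Adj x z then 1 else 0) :=
        Finset.sum_congr rfl fun w _ => Finset.sum_comm
    _ = ∑ z : Fin n, ∑ w ∈ A, ∑ x ∈ X,
          (if G.Adj w z then (1:ℕ) else 0) * (if G.Adj x z then 1 else 0) :=
        Finset.sum_comm
    _ = ∑ z : Fin n, (∑ w ∈ A, if G.Adj w z then (1:ℕ) else 0)
          * (∑ x ∈ X, if G.Adj x z then 1 else 0) :=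
        Finset.sum_congr rfl fun z _ => (Finset.sum_mul_sum _ _ _ _).symm

lemma sum_filter_card (G : SimpleGraph (Fin n)) (A : Finset (Fin n)) :
    ∑ z : Fin n, (A.filter (fun w => G.Adj w z)).card = ∑ w ∈ A, G.degree w := by
  simp only [card_filter]
  rw [Finset.sum_comm]
  refine Finset.sum_congr rfl fun w _ => ?_
  rw [← card_filter, show univ.filter (fun z => G.Adj w z) = G.neighborFinset w by
    ext z; simp [SimpleGraph.mem_neighborFinset], SimpleGraph.card_neighborFinset_eq_degree]

def P1deg (n : ℕ) (D : Fin n → ℕ) (v : Fin n) : Prop := (Real.log n) ^ 2 ≤ (D v : ℝ)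
def P3deg (n : ℕ) (D : Fin n → ℕ) (v : Fin n) : Prop := (n : ℝ) ^ ((4:ℝ)/5) ≤ (D v : ℝ)

def deg1 (n : ℕ) (D : Fin n → ℕ) (G : SimpleGraph (Fin n)) (u : Fin n) : ℕ :=
  (univ.filter (fun w => P1deg n D w ∧ G.Adj u w)).card

lemma filter_and_adj (P : Fin n → Prop) (G : SimpleGraph (Fin n)) (u : Fin n) :
    univ.filter (fun b => P b ∧ G.Adj u b) = (G.neighborFinset u).filter P := by
  ext b; simp [SimpleGraph.mem_neighborFinset, and_comm]

lemma deg1_eq (n : ℕ) (D : Fin n → ℕ) (G : SimpleGraph (Fin n)) (u : Fin n) :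
    deg1 n D G u = ((G.neighborFinset u).filter (P1deg n D)).card :=
  congrArg card (filter_and_adj _ _ _)

lemma deg1_swG {G : SimpleGraph (Fin n)} {u w x y : Fin n} (h : SwCond G u w x y)
    {D : Fin n → ℕ} (hw : ¬ P1deg n D w) (hx : P1deg n D x) :
    deg1 n D (swG G u w x y) u = deg1 n D G u + 1 := by
  rw [deg1_eq, deg1_eq, h.nb_u, filter_insert, if_pos hx,
    card_insert_of_notMem (fun hc => h.nux (by
      have := mem_of_mem_erase (mem_filter.mp hc).1
      simpa [SimpleGraph.mem_neighborFinset] using this)),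
    Finset.filter_erase, erase_eq_of_notMem (fun hc => hw (mem_filter.mp hc).2)]

/-- The sets used in the forward switching count. -/
def Aset (n : ℕ) (D : Fin n → ℕ) (G : SimpleGraph (Fin n)) (u : Fin n) : Finset (Fin n) :=
  (G.neighborFinset u).filter (fun w => ¬ P1deg n D w)

def Xset (n : ℕ) (D : Fin n → ℕ) (G : SimpleGraph (Fin n)) (u : Fin n) : Finset (Fin n) :=
  univ.filter (fun x => P1deg n D x ∧ ¬ P3deg n D x ∧ ¬ G.Adj u x ∧ x ≠ u)

def Yset (n : ℕ) (G : SimpleGraph (Fin n)) (u w x : Fin n) : Finset (Fin n) :=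
  (G.neighborFinset x).filter (fun y => ¬ G.Adj w y ∧ y ≠ u ∧ y ≠ w)

set_option maxHeartbeats 2000000 in
lemma tup_lower
    (n : ℕ) (D : Fin n → ℕ) (dbar ε : ℝ) (u : Fin n) (j : ℕ)
    (hdbar : 1 ≤ dbar) (hε : 0 < ε) (hε2 : ε ≤ 1/2)
    (hsum : (∑ i, (D i : ℝ)) ≤ dbar * n)
    (hS1 : ε * n ≤ ∑ v ∈ univ.filter (P1deg n D), (D v : ℝ))
    (hS3 : (∑ v ∈ univ.filter (P3deg n D), (D v : ℝ)) < ε * n / 10)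
    (hu : P1deg n D u)
    (hj1 : (j:ℝ) + 1 ≤ ε * D u / (8 * dbar))
    (hj2 : (j:ℝ) ≤ 2 * (n:ℝ) ^ ((1:ℝ)/6))
    (hL2 : 200 * dbar ≤ ε * (Real.log n) ^ 2)
    (hG1 : (2 * (n:ℝ) ^ ((1:ℝ)/6) + 2) * (n:ℝ) ^ ((4:ℝ)/5) ≤ ε * n / 100)
    (hG4 : (Real.log n) ^ 2 * (n:ℝ) ^ ((4:ℝ)/5) ≤ ε * n / 100)
    (G : SimpleGraph (Fin n))
    (hdeg : ∀ v, G.degree v = D v)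
    (hj : deg1 n D G u = j) :
    (3:ℝ)/8 * (ε * n * D u)
      ≤ ∑ w ∈ Aset n D G u, ∑ x ∈ Xset n D G u, ((Yset n G u w x).card : ℝ) := by
  set L2 := (Real.log n) ^ 2 with hL2def
  set P45 := (n:ℝ) ^ ((4:ℝ)/5) with hP45def
  have hNcard : ∀ v, (G.neighborFinset v).card = D v := fun v => by
    rw [SimpleGraph.card_neighborFinset_eq_degree, hdeg]
  have hnn : (0:ℝ) ≤ (n:ℝ) := Nat.cast_nonneg n
  have hεn : (0:ℝ) ≤ ε * n := by positivity
  have hL2pos : (0:ℝ) < L2 := by nlinarith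
  have hP45nonneg : (0:ℝ) ≤ P45 := Real.rpow_nonneg hnn _
  -- D u is large
  have hDu : L2 ≤ (D u : ℝ) := hu
  have hDupos : (0:ℝ) < (D u : ℝ) := lt_of_lt_of_le hL2pos hDu
  -- j ≤ D u / 2
  have hjDu : (j:ℝ) ≤ (D u : ℝ) / 2 := by
    have h1 : ε * (D u : ℝ) / (8 * dbar) ≤ (D u : ℝ) / 16 := by
      rw [div_le_div_iff₀ (by linarith) (by norm_num)]
      nlinarith
    linarith
  -- cardinality of A
  have hjA : ((G.neighborFinset u).filter (P1deg n D)).card = j := by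
    rw [← deg1_eq, hj]
  have hAX : ((G.neighborFinset u).filter (P1deg n D)).card
      + (Aset n D G u).card = D u := by
    rw [Aset, Finset.card_filter_add_card_filter_not, hNcard]
  have hAcard : ((Aset n D G u).card : ℝ) = (D u : ℝ) - j := by
    have := hAX; rw [hjA] at this
    have : (Aset n D G u).card = D u - j := by omega
    rw [this]
    have hjle : j ≤ D u := by omega
    push_cast [hjle]; ring
  have hAhalf : (D u : ℝ) / 2 ≤ ((Aset n D G u).card : ℝ) := by
    rw [hAcard]; linarith
  have hAnonneg : (0:ℝ) ≤ ((Aset n D G u).card : ℝ) := Nat.cast_nonneg _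
  -- X card bound
  have hXsub : Xset n D G u ⊆ univ.filter (P1deg n D) := by
    intro x hx
    simp only [Xset, mem_filter] at hx ⊢
    exact ⟨hx.1, hx.2.1⟩
  have hXL2 : ((Xset n D G u).card : ℝ) * L2 ≤ dbar * n := by
    have h1 : ((Xset n D G u).card : ℝ) * L2 = ∑ _x ∈ Xset n D G u, L2 := by
      rw [Finset.sum_const, nsmul_eq_mul]
    rw [h1]
    have h2 : ∑ _x ∈ Xset n D G u, L2 ≤ ∑ x ∈ Xset n D G u, (D x : ℝ) := by
      refine Finset.sum_le_sum fun x hx => ?_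
      simp only [Xset, mem_filter] at hx
      exact hx.2.1
    have h3 : ∑ x ∈ Xset n D G u, (D x : ℝ) ≤ ∑ i, (D i : ℝ) :=
      Finset.sum_le_sum_of_subset_of_nonneg (subset_univ _)
        (fun i _ _ => Nat.cast_nonneg _)
    linarith
  have hXsmall : 2 * ((Xset n D G u).card : ℝ) ≤ ε * n / 100 := by
    have h1 : 200 * (((Xset n D G u).card : ℝ) * L2) ≤ 200 * (dbar * n) := by linarith
    have h2 : 2 * ((Xset n D G u).card : ℝ) * (100 * L2) ≤ (ε * n / 100) * (100 * L2) := by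
      nlinarith [Nat.cast_nonneg (α := ℝ) (Xset n D G u).card]
    have h3 : (0:ℝ) < 100 * L2 := by linarith
    exact le_of_mul_le_mul_right h2 h3
  -- lower bound on the degree mass of X
  have hfilterX : Xset n D G u
      = ((univ.filter (P1deg n D)).filter (fun x => ¬ P3deg n D x)).filter
          (fun x => ¬ G.Adj u x ∧ x ≠ u) := by
    ext x
    simp only [Xset, mem_filter, mem_univ, true_and]
    tauto
  have hsum_split1 : (∑ v ∈ (univ.filter (P1deg n D)).filter (P3deg n D), (D v : ℝ))
      + (∑ v ∈ (univ.filter (P1deg n D)).filter (fun x => ¬ P3deg n D x), (D v : ℝ))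
      = ∑ v ∈ univ.filter (P1deg n D), (D v : ℝ) :=
    Finset.sum_filter_add_sum_filter_not _ _ _
  have hsum_split2 :
      (∑ v ∈ ((univ.filter (P1deg n D)).filter (fun x => ¬ P3deg n D x)).filter
          (fun x => ¬ G.Adj u x ∧ x ≠ u), (D v : ℝ))
      + (∑ v ∈ ((univ.filter (P1deg n D)).filter (fun x => ¬ P3deg n D x)).filter
          (fun x => ¬(¬ G.Adj u x ∧ x ≠ u)), (D v : ℝ))
      = ∑ v ∈ (univ.filter (P1deg n D)).filter (fun x => ¬ P3deg n D x), (D v : ℝ) :=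
    Finset.sum_filter_add_sum_filter_not _ _ _
  have hS13 : (∑ v ∈ (univ.filter (P1deg n D)).filter (P3deg n D), (D v : ℝ))
      ≤ ∑ v ∈ univ.filter (P3deg n D), (D v : ℝ) := by
    refine Finset.sum_le_sum_of_subset_of_nonneg ?_ (fun i _ _ => Nat.cast_nonneg _)
    intro v hv
    simp only [mem_filter, mem_univ, true_and] at hv ⊢
    exact hv.2
  have hZ : (∑ v ∈ ((univ.filter (P1deg n D)).filter (fun x => ¬ P3deg n D x)).filter
        (fun x => ¬(¬ G.Adj u x ∧ x ≠ u)), (D v : ℝ)) ≤ ((j:ℝ) + 1) * P45 := by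
    set Z := ((univ.filter (P1deg n D)).filter (fun x => ¬ P3deg n D x)).filter
        (fun x => ¬(¬ G.Adj u x ∧ x ≠ u)) with hZdef
    have hZsub : Z ⊆ insert u ((G.neighborFinset u).filter (P1deg n D)) := by
      intro z hz
      simp only [hZdef, mem_filter, mem_univ, true_and, not_and, not_not, ne_eq] at hz
      rcases hz with ⟨⟨hz1, _⟩, hz3⟩
      by_cases hzu : z = u
      · simp [hzu]
      · have : G.Adj u z := by tauto
        simp only [mem_insert, mem_filter, SimpleGraph.mem_neighborFinset]
        exact Or.inr ⟨this, hz1⟩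
    have hZcard : (Z.card : ℝ) ≤ (j:ℝ) + 1 := by
      have h1 : Z.card ≤ j + 1 := by
        calc Z.card ≤ (insert u ((G.neighborFinset u).filter (P1deg n D))).card :=
              Finset.card_le_card hZsub
          _ ≤ ((G.neighborFinset u).filter (P1deg n D)).card + 1 := Finset.card_insert_le _ _
          _ = j + 1 := by rw [hjA]
      exact_mod_cast h1
    have hbound : ∀ v ∈ Z, (D v : ℝ) ≤ P45 := by
      intro v hv
      simp only [hZdef, mem_filter] at hv
      have := hv.1.2
      simp only [P3deg, not_le] at this
      exact le_of_lt this
    calc (∑ v ∈ Z, (D v : ℝ)) ≤ ∑ _v ∈ Z, P45 := Finset.sum_le_sum hbound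
      _ = (Z.card : ℝ) * P45 := by rw [Finset.sum_const, nsmul_eq_mul]
      _ ≤ ((j:ℝ) + 1) * P45 := by
          apply mul_le_mul_of_nonneg_right hZcard hP45nonneg
  have hj1P45 : ((j:ℝ) + 1) * P45 ≤ ε * n / 100 := by
    have : (j:ℝ) + 1 ≤ 2 * (n:ℝ) ^ ((1:ℝ)/6) + 2 := by linarith
    calc ((j:ℝ) + 1) * P45 ≤ (2 * (n:ℝ) ^ ((1:ℝ)/6) + 2) * P45 :=
          mul_le_mul_of_nonneg_right this hP45nonneg
      _ ≤ ε * n / 100 := hG1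
  have hXD : ε * n - ε * n / 10 - ε * n / 100 ≤ ∑ x ∈ Xset n D G u, (D x : ℝ) := by
    rw [hfilterX]
    linarith
  -- codegree bound
  have hcodN : ∑ w ∈ Aset n D G u, ∑ x ∈ Xset n D G u,
      (G.neighborFinset w ∩ G.neighborFinset x).card
      = ∑ z : Fin n, ((Aset n D G u).filter (fun w => G.Adj w z)).card
          * ((Xset n D G u).filter (fun x => G.Adj x z)).card :=
    codeg_swap G _ _
  have haA_le : ∀ z, ((Aset n D G u).filter (fun w => G.Adj w z)).card ≤ (Aset n D G u).card :=
    fun z => Finset.card_le_card (Finset.filter_subset _ _)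
  have haX_le : ∀ z, ((Xset n D G u).filter (fun x => G.Adj x z)).card ≤ D z := by
    intro z
    rw [← hNcard z]
    refine Finset.card_le_card ?_
    intro x hx
    simp only [mem_filter, SimpleGraph.mem_neighborFinset] at hx ⊢
    exact hx.2.symm
  have hsum_aA : ∑ z : Fin n, ((Aset n D G u).filter (fun w => G.Adj w z)).card
      = ∑ w ∈ Aset n D G u, D w := by
    rw [sum_filter_card]
    exact Finset.sum_congr rfl fun w _ => hdeg w
  have hDwL2 : ∀ w ∈ Aset n D G u, (D w : ℝ) ≤ L2 := by
    intro w hw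
    simp only [Aset, mem_filter, P1deg, not_le] at hw
    exact le_of_lt hw.2
  -- split the codegree sum over z by P3
  have hcod_split : (∑ z : Fin n, (((Aset n D G u).filter (fun w => G.Adj w z)).card : ℝ)
          * ((Xset n D G u).filter (fun x => G.Adj x z)).card)
      = (∑ z ∈ univ.filter (P3deg n D), (((Aset n D G u).filter (fun w => G.Adj w z)).card : ℝ)
          * ((Xset n D G u).filter (fun x => G.Adj x z)).card)
        + ∑ z ∈ univ.filter (fun z => ¬ P3deg n D z),
            (((Aset n D G u).filter (fun w => G.Adj w z)).card : ℝ)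
          * ((Xset n D G u).filter (fun x => G.Adj x z)).card :=
    (Finset.sum_filter_add_sum_filter_not univ _ _).symm
  have hcod1 : (∑ z ∈ univ.filter (P3deg n D),
        (((Aset n D G u).filter (fun w => G.Adj w z)).card : ℝ)
          * ((Xset n D G u).filter (fun x => G.Adj x z)).card)
      ≤ ((Aset n D G u).card : ℝ) * (ε * n / 10) := by
    have h1 : ∀ z ∈ univ.filter (P3deg n D),
        (((Aset n D G u).filter (fun w => G.Adj w z)).card : ℝ)
          * ((Xset n D G u).filter (fun x => G.Adj x z)).card
        ≤ ((Aset n D G u).card : ℝ) * (D z : ℝ) := by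
      intro z _
      apply mul_le_mul (by exact_mod_cast haA_le z) (by exact_mod_cast haX_le z)
        (Nat.cast_nonneg _) hAnonneg
    calc (∑ z ∈ univ.filter (P3deg n D), (((Aset n D G u).filter (fun w => G.Adj w z)).card : ℝ)
          * ((Xset n D G u).filter (fun x => G.Adj x z)).card)
        ≤ ∑ z ∈ univ.filter (P3deg n D), ((Aset n D G u).card : ℝ) * (D z : ℝ) :=
          Finset.sum_le_sum h1
      _ = ((Aset n D G u).card : ℝ) * ∑ z ∈ univ.filter (P3deg n D), (D z : ℝ) := by
          rw [Finset.mul_sum]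
      _ ≤ ((Aset n D G u).card : ℝ) * (ε * n / 10) := by
          apply mul_le_mul_of_nonneg_left (le_of_lt hS3) hAnonneg
  have hcod2 : (∑ z ∈ univ.filter (fun z => ¬ P3deg n D z),
        (((Aset n D G u).filter (fun w => G.Adj w z)).card : ℝ)
          * ((Xset n D G u).filter (fun x => G.Adj x z)).card)
      ≤ ((Aset n D G u).card : ℝ) * (ε * n / 100) := by
    have h1 : ∀ z ∈ univ.filter (fun z => ¬ P3deg n D z),
        (((Aset n D G u).filter (fun w => G.Adj w z)).card : ℝ)
          * ((Xset n D G u).filter (fun x => G.Adj x z)).card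
        ≤ (((Aset n D G u).filter (fun w => G.Adj w z)).card : ℝ) * P45 := by
      intro z hz
      simp only [mem_filter, mem_univ, true_and, P3deg, not_le] at hz
      refine mul_le_mul_of_nonneg_left ?_ (Nat.cast_nonneg _)
      calc (((Xset n D G u).filter (fun x => G.Adj x z)).card : ℝ) ≤ (D z : ℝ) := by
            exact_mod_cast haX_le z
        _ ≤ P45 := le_of_lt hz
    calc (∑ z ∈ univ.filter (fun z => ¬ P3deg n D z),
          (((Aset n D G u).filter (fun w => G.Adj w z)).card : ℝ)
            * ((Xset n D G u).filter (fun x => G.Adj x z)).card)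
        ≤ ∑ z ∈ univ.filter (fun z => ¬ P3deg n D z),
            (((Aset n D G u).filter (fun w => G.Adj w z)).card : ℝ) * P45 :=
          Finset.sum_le_sum h1
      _ ≤ ∑ z : Fin n, (((Aset n D G u).filter (fun w => G.Adj w z)).card : ℝ) * P45 := by
          refine Finset.sum_le_sum_of_subset_of_nonneg (subset_univ _) fun i _ _ => ?_
          positivity
      _ = (∑ z : Fin n, (((Aset n D G u).filter (fun w => G.Adj w z)).card : ℝ)) * P45 := by
          rw [← Finset.sum_mul]
      _ = ((∑ w ∈ Aset n D G u, (D w : ℝ))) * P45 := by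
          congr 1
          rw [← Nat.cast_sum, ← Nat.cast_sum, hsum_aA]
      _ ≤ (((Aset n D G u).card : ℝ) * L2) * P45 := by
          refine mul_le_mul_of_nonneg_right ?_ hP45nonneg
          calc (∑ w ∈ Aset n D G u, (D w : ℝ)) ≤ ∑ _w ∈ Aset n D G u, L2 :=
                Finset.sum_le_sum hDwL2
            _ = ((Aset n D G u).card : ℝ) * L2 := by rw [Finset.sum_const, nsmul_eq_mul]
      _ = ((Aset n D G u).card : ℝ) * (L2 * P45) := by ring
      _ ≤ ((Aset n D G u).card : ℝ) * (ε * n / 100) :=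
          mul_le_mul_of_nonneg_left hG4 hAnonneg
  have hcod : (∑ w ∈ Aset n D G u, ∑ x ∈ Xset n D G u,
        ((G.neighborFinset w ∩ G.neighborFinset x).card : ℝ))
      ≤ ((Aset n D G u).card : ℝ) * (ε * n / 10 + ε * n / 100) := by
    have hcast : (∑ w ∈ Aset n D G u, ∑ x ∈ Xset n D G u,
        ((G.neighborFinset w ∩ G.neighborFinset x).card : ℝ))
        = ∑ z : Fin n, (((Aset n D G u).filter (fun w => G.Adj w z)).card : ℝ)
          * ((Xset n D G u).filter (fun x => G.Adj x z)).card := by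
      push_cast [← Nat.cast_sum]
      exact_mod_cast congrArg (Nat.cast : ℕ → ℝ) hcodN
    rw [hcast, hcod_split]
    linarith
  -- per-pair lower bound on Y
  have hY : ∀ w ∈ Aset n D G u, ∀ x ∈ Xset n D G u,
      (D x : ℝ) - ((G.neighborFinset w ∩ G.neighborFinset x).card : ℝ) - 2
        ≤ ((Yset n G u w x).card : ℝ) := by
    intro w _ x _
    have hsub : G.neighborFinset x
        ⊆ Yset n G u w x ∪ ((G.neighborFinset w ∩ G.neighborFinset x) ∪ {u, w}) := by
      intro y hy
      simp only [SimpleGraph.mem_neighborFinset] at hy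
      by_cases h1 : G.Adj w y
      · simp only [mem_union, mem_inter, SimpleGraph.mem_neighborFinset]
        exact Or.inr (Or.inl ⟨h1, hy⟩)
      by_cases h2 : y = u
      · simp [h2]
      by_cases h3 : y = w
      · simp [h3]
      · simp only [mem_union, Yset, mem_filter, SimpleGraph.mem_neighborFinset]
        exact Or.inl ⟨hy, h1, h2, h3⟩
    have hcard : D x ≤ (Yset n G u w x).card
        + ((G.neighborFinset w ∩ G.neighborFinset x).card + 2) := by
      calc D x = (G.neighborFinset x).card := (hNcard x).symm
        _ ≤ (Yset n G u w x ∪ ((G.neighborFinset w ∩ G.neighborFinset x) ∪ {u, w})).card :=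
            Finset.card_le_card hsub
        _ ≤ (Yset n G u w x).card
            + ((G.neighborFinset w ∩ G.neighborFinset x) ∪ {u, w}).card :=
            Finset.card_union_le _ _
        _ ≤ (Yset n G u w x).card
            + (((G.neighborFinset w ∩ G.neighborFinset x)).card + ({u, w} : Finset (Fin n)).card) := by
            have := Finset.card_union_le (G.neighborFinset w ∩ G.neighborFinset x)
              ({u, w} : Finset (Fin n))
            omega
        _ ≤ (Yset n G u w x).card
            + ((G.neighborFinset w ∩ G.neighborFinset x).card + 2) := by
            have : ({u, w} : Finset (Fin n)).card ≤ 2 :=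
              (Finset.card_insert_le _ _).trans (by simp)
            omega
    have := (Nat.cast_le (α := ℝ)).mpr hcard
    push_cast at this
    linarith
  -- assemble
  have hrow : ∀ w ∈ Aset n D G u,
      (∑ x ∈ Xset n D G u, (D x : ℝ))
        - (∑ x ∈ Xset n D G u, ((G.neighborFinset w ∩ G.neighborFinset x).card : ℝ))
        - 2 * ((Xset n D G u).card : ℝ)
      ≤ ∑ x ∈ Xset n D G u, ((Yset n G u w x).card : ℝ) := by
    intro w hw
    have h1 : ∑ x ∈ Xset n D G u,
        ((D x : ℝ) - ((G.neighborFinset w ∩ G.neighborFinset x).card : ℝ) - 2)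
        ≤ ∑ x ∈ Xset n D G u, ((Yset n G u w x).card : ℝ) :=
      Finset.sum_le_sum (fun x hx => hY w hw x hx)
    have h2 : ∑ x ∈ Xset n D G u,
        ((D x : ℝ) - ((G.neighborFinset w ∩ G.neighborFinset x).card : ℝ) - 2)
        = (∑ x ∈ Xset n D G u, (D x : ℝ))
          - (∑ x ∈ Xset n D G u, ((G.neighborFinset w ∩ G.neighborFinset x).card : ℝ))
          - 2 * ((Xset n D G u).card : ℝ) := by
      rw [Finset.sum_sub_distrib, Finset.sum_sub_distrib, Finset.sum_const, nsmul_eq_mul]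
      ring
    linarith
  have htotal : ((Aset n D G u).card : ℝ) * ((∑ x ∈ Xset n D G u, (D x : ℝ))
        - 2 * ((Xset n D G u).card : ℝ))
      - (∑ w ∈ Aset n D G u, ∑ x ∈ Xset n D G u,
          ((G.neighborFinset w ∩ G.neighborFinset x).card : ℝ))
      ≤ ∑ w ∈ Aset n D G u, ∑ x ∈ Xset n D G u, ((Yset n G u w x).card : ℝ) := by
    have h1 := Finset.sum_le_sum hrow
    have h2 : ∑ _w ∈ Aset n D G u, ((∑ x ∈ Xset n D G u, (D x : ℝ))
          - 2 * ((Xset n D G u).card : ℝ))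
        = ((Aset n D G u).card : ℝ) * ((∑ x ∈ Xset n D G u, (D x : ℝ))
          - 2 * ((Xset n D G u).card : ℝ)) := by
      rw [Finset.sum_const, nsmul_eq_mul]
    have h3 : ∑ w ∈ Aset n D G u, ((∑ x ∈ Xset n D G u, (D x : ℝ))
          - (∑ x ∈ Xset n D G u, ((G.neighborFinset w ∩ G.neighborFinset x).card : ℝ))
          - 2 * ((Xset n D G u).card : ℝ))
        = ((Aset n D G u).card : ℝ) * ((∑ x ∈ Xset n D G u, (D x : ℝ))
            - 2 * ((Xset n D G u).card : ℝ))
          - ∑ w ∈ Aset n D G u, ∑ x ∈ Xset n D G u,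
              ((G.neighborFinset w ∩ G.neighborFinset x).card : ℝ) := by
      rw [Finset.sum_sub_distrib, Finset.sum_sub_distrib, Finset.sum_const, Finset.sum_const]
      simp only [nsmul_eq_mul]
      ring
    rw [h3] at h1
    exact h1
  -- final arithmetic
  have hfinal : (3:ℝ)/8 * (ε * n * D u)
      ≤ ((Aset n D G u).card : ℝ) * ((∑ x ∈ Xset n D G u, (D x : ℝ))
          - 2 * ((Xset n D G u).card : ℝ))
        - (∑ w ∈ Aset n D G u, ∑ x ∈ Xset n D G u,
          ((G.neighborFinset w ∩ G.neighborFinset x).card : ℝ)) := by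
    have hXD2 : (77:ℝ)/100 * (ε * n)
        ≤ (∑ x ∈ Xset n D G u, (D x : ℝ)) - 2 * ((Xset n D G u).card : ℝ)
          - (ε * n / 10 + ε * n / 100) := by
      linarith
    have hAc := hAhalf
    have h2 : ((Aset n D G u).card : ℝ) * ((77:ℝ)/100 * (ε * n))
        ≥ ((D u : ℝ)/2) * ((77:ℝ)/100 * (ε * n)) := by
      apply mul_le_mul_of_nonneg_right hAc (by positivity)
    nlinarith [hAnonneg, hεn, hDupos.le]
  linarith

lemma backward_count (n : ℕ) (D : Fin n → ℕ) (u : Fin n) (G' : SimpleGraph (Fin n)) :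
    (((univ ×ˢ univ ×ˢ univ) : Finset (Fin n × Fin n × Fin n)).filter
        (fun t => (P1deg n D t.2.1 ∧ G'.Adj u t.2.1) ∧ G'.Adj t.1 t.2.2)).card
      = deg1 n D G' u * ∑ v : Fin n, G'.degree v := by
  rw [card_filter, Finset.sum_product]
  have h1 : ∀ w : Fin n, (∑ p ∈ (univ ×ˢ univ : Finset (Fin n × Fin n)),
      if (P1deg n D p.1 ∧ G'.Adj u p.1) ∧ G'.Adj w p.2 then 1 else 0)
      = (∑ x : Fin n, if P1deg n D x ∧ G'.Adj u x then 1 else 0)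
        * (∑ y : Fin n, if G'.Adj w y then 1 else 0) := by
    intro w
    rw [Finset.sum_product, Finset.sum_mul_sum]
    refine Finset.sum_congr rfl fun x _ => Finset.sum_congr rfl fun y _ => ?_
    by_cases hp : P1deg n D x ∧ G'.Adj u x <;> by_cases hq : G'.Adj w y <;> simp [hp, hq]
  simp only [h1]
  rw [← Finset.mul_sum]
  congr 1
  · rw [← card_filter]
    rfl
  · refine Finset.sum_congr rfl fun w _ => ?_
    rw [← card_filter, show univ.filter (fun y => G'.Adj w y) = G'.neighborFinset w by
      ext z; simp [SimpleGraph.mem_neighborFinset], SimpleGraph.card_neighborFinset_eq_degree]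

set_option maxHeartbeats 2000000 in
lemma step_lemma
    (n : ℕ) (D : Fin n → ℕ) (dbar ε : ℝ) (u : Fin n) (j : ℕ)
    (hn : 1 ≤ n)
    (hdbar : 1 ≤ dbar) (hε : 0 < ε) (hε2 : ε ≤ 1/2)
    (hsum : (∑ i, (D i : ℝ)) ≤ dbar * n)
    (hS1 : ε * n ≤ ∑ v ∈ univ.filter (P1deg n D), (D v : ℝ))
    (hS3 : (∑ v ∈ univ.filter (P3deg n D), (D v : ℝ)) < ε * n / 10)
    (hu : P1deg n D u)
    (hj1 : (j:ℝ) + 1 ≤ ε * D u / (8 * dbar))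
    (hj2 : (j:ℝ) ≤ 2 * (n:ℝ) ^ ((1:ℝ)/6))
    (hL2 : 200 * dbar ≤ ε * (Real.log n) ^ 2)
    (hG1 : (2 * (n:ℝ) ^ ((1:ℝ)/6) + 2) * (n:ℝ) ^ ((4:ℝ)/5) ≤ ε * n / 100)
    (hG4 : (Real.log n) ^ 2 * (n:ℝ) ^ ((4:ℝ)/5) ≤ ε * n / 100) :
    (((graphsWithDegreeSeq n D).filter (fun G => deg1 n D G u = j)).card : ℝ)
      ≤ 1/2 * (((graphsWithDegreeSeq n D).filter (fun G => deg1 n D G u = j+1)).card : ℝ) := by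
  classical
  set Bj := (graphsWithDegreeSeq n D).filter (fun G => deg1 n D G u = j) with hBjdef
  set Bj1 := (graphsWithDegreeSeq n D).filter (fun G => deg1 n D G u = j+1) with hBj1def
  set T : Finset ((_ : SimpleGraph (Fin n)) × (_ : Fin n) × (_ : Fin n) × Fin n) :=
    Bj.sigma (fun G => (Aset n D G u).sigma
      (fun w => (Xset n D G u).sigma (fun x => Yset n G u w x))) with hTdef
  set T' : Finset ((_ : SimpleGraph (Fin n)) × Fin n × Fin n × Fin n) :=
    Bj1.sigma (fun G' => (univ ×ˢ univ ×ˢ univ).filter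
      (fun t : Fin n × Fin n × Fin n =>
        (P1deg n D t.2.1 ∧ G'.Adj u t.2.1) ∧ G'.Adj t.1 t.2.2)) with hT'def
  -- basic positivity
  have hnR : (1:ℝ) ≤ (n:ℝ) := by exact_mod_cast hn
  have hL2pos : (0:ℝ) < (Real.log n)^2 := by nlinarith
  have hDu : ((Real.log n)^2 : ℝ) ≤ (D u : ℝ) := hu
  have hDupos : (0:ℝ) < (D u : ℝ) := lt_of_lt_of_le hL2pos hDu
  have hεnDu : (0:ℝ) < ε * (n:ℝ) * (D u : ℝ) := by positivity
  -- extract conditions from membership in T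
  have hTmem : ∀ p ∈ T, SwCond p.1 u p.2.1 p.2.2.1 p.2.2.2
      ∧ ¬ P1deg n D p.2.1 ∧ P1deg n D p.2.2.1 ∧ p.1 ∈ Bj := by
    rintro ⟨G, w, x, y⟩ hp
    simp only [hTdef, Finset.mem_sigma] at hp
    obtain ⟨hG, hw, hx, hy⟩ := hp
    simp only [Aset, mem_filter, SimpleGraph.mem_neighborFinset] at hw
    simp only [Xset, mem_filter, mem_univ, true_and] at hx
    simp only [Yset, mem_filter, SimpleGraph.mem_neighborFinset] at hy
    obtain ⟨hadjuw, hnP1w⟩ := hw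
    obtain ⟨hP1x, hnP3x, hnadjux, hxu⟩ := hx
    obtain ⟨hadjxy, hnadjwy, hyu, hyw⟩ := hy
    dsimp only
    refine ⟨⟨hadjuw, hadjxy, hnadjux, hnadjwy, Ne.symm hxu, Ne.symm hyu, ?_, Ne.symm hyw⟩,
      hnP1w, hP1x, hG⟩
    rintro rfl
    exact hnP1w hP1x
  -- lower bound for T
  have hTlower : (Bj.card : ℝ) * ((3:ℝ)/8 * (ε * n * D u)) ≤ (T.card : ℝ) := by
    have hcard : T.card = ∑ G ∈ Bj, ∑ w ∈ Aset n D G u, ∑ x ∈ Xset n D G u,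
        (Yset n G u w x).card := by
      rw [hTdef, Finset.card_sigma]
      refine Finset.sum_congr rfl fun G _ => ?_
      rw [Finset.card_sigma]
      refine Finset.sum_congr rfl fun w _ => ?_
      rw [Finset.card_sigma]
    have h1 : ∀ G ∈ Bj, (3:ℝ)/8 * (ε * n * D u)
        ≤ ∑ w ∈ Aset n D G u, ∑ x ∈ Xset n D G u, ((Yset n G u w x).card : ℝ) := by
      intro G hG
      simp only [hBjdef, mem_filter, graphsWithDegreeSeq, mem_univ, true_and] at hG
      exact tup_lower n D dbar ε u j hdbar hε hε2 hsum hS1 hS3 hu hj1 hj2 hL2 hG1 hG4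
        G hG.1 hG.2
    calc (Bj.card : ℝ) * ((3:ℝ)/8 * (ε * n * D u))
        = ∑ _G ∈ Bj, (3:ℝ)/8 * (ε * n * D u) := by rw [Finset.sum_const, nsmul_eq_mul]
      _ ≤ ∑ G ∈ Bj, ∑ w ∈ Aset n D G u, ∑ x ∈ Xset n D G u, ((Yset n G u w x).card : ℝ) :=
          Finset.sum_le_sum h1
      _ = (T.card : ℝ) := by
          rw [hcard]; push_cast; rfl
  -- the injection into T'
  have hinj : T.card ≤ T'.card := by
    refine Finset.card_le_card_of_injOn
      (fun q => ⟨swG q.1 u q.2.1 q.2.2.1 q.2.2.2, (q.2.1, q.2.2.1, q.2.2.2)⟩) ?_ ?_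
    · rintro ⟨G, w, x, y⟩ hp
      obtain ⟨hc, hnP1w, hP1x, hGBj⟩ := hTmem _ hp
      simp only [hBjdef, mem_filter] at hGBj
      obtain ⟨hGΩ, hdeg1⟩ := hGBj
      simp only [graphsWithDegreeSeq, mem_filter, mem_univ, true_and] at hGΩ
      have hrev := hc.rev
      simp only [Finset.mem_coe, hT'def, Finset.mem_sigma, mem_filter, mem_product, mem_univ, true_and,
        and_true]
      refine ⟨?_, ⟨hP1x, hrev.auw⟩, hrev.axy⟩
      simp only [hBj1def, mem_filter, graphsWithDegreeSeq, mem_univ, true_and]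
      constructor
      · intro v
        rw [hc.degree_eq v, hGΩ v]
      · rw [deg1_swG hc hnP1w hP1x, hdeg1]
    · rintro ⟨G1, w1, x1, y1⟩ hp1 ⟨G2, w2, x2, y2⟩ hp2 heq
      obtain ⟨hc1, -, -, -⟩ := hTmem _ hp1
      obtain ⟨hc2, -, -, -⟩ := hTmem _ hp2
      dsimp only at hc1 hc2 heq ⊢
      simp only [Sigma.mk.inj_iff, Prod.mk.injEq, heq_eq_eq] at heq
      obtain ⟨hG, hw, hx, hy⟩ := heq
      subst hw; subst hx; subst hy
      have : G1 = G2 := by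
        have e1 := hc1.swG_swG
        have e2 := hc2.swG_swG
        rw [← e1, ← e2, hG]
      subst this
      rfl
  -- upper bound for T'
  have hT'upper : (T'.card : ℝ) ≤ (Bj1.card : ℝ) * (((j:ℝ)+1) * (dbar * n)) := by
    have hcard : T'.card = ∑ G' ∈ Bj1, ((j+1) * ∑ v : Fin n, G'.degree v) := by
      rw [hT'def, Finset.card_sigma]
      refine Finset.sum_congr rfl fun G' hG' => ?_
      rw [backward_count]
      simp only [hBj1def, mem_filter] at hG'
      rw [hG'.2]
    have hsumdeg : ∀ G' ∈ Bj1, ((∑ v : Fin n, G'.degree v : ℕ) : ℝ) ≤ dbar * n := by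
      intro G' hG'
      simp only [hBj1def, mem_filter, graphsWithDegreeSeq, mem_univ, true_and] at hG'
      have : ∀ v, G'.degree v = D v := hG'.1
      calc ((∑ v : Fin n, G'.degree v : ℕ) : ℝ) = ∑ v : Fin n, (D v : ℝ) := by
            push_cast
            exact Finset.sum_congr rfl fun v _ => by rw [this v]
        _ ≤ dbar * n := hsum
    calc (T'.card : ℝ) = ∑ G' ∈ Bj1, (((j:ℝ)+1) * ((∑ v : Fin n, G'.degree v : ℕ) : ℝ)) := by
          rw [hcard]; push_cast; ring_nf
      _ ≤ ∑ _G' ∈ Bj1, (((j:ℝ)+1) * (dbar * n)) := by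
          refine Finset.sum_le_sum fun G' hG' => ?_
          have := hsumdeg G' hG'
          have hj0 : (0:ℝ) ≤ (j:ℝ)+1 := by positivity
          nlinarith
      _ = (Bj1.card : ℝ) * (((j:ℝ)+1) * (dbar * n)) := by
          rw [Finset.sum_const, nsmul_eq_mul]
  -- combine
  have hTT' : (T.card : ℝ) ≤ (T'.card : ℝ) := by exact_mod_cast hinj
  have hstep1 : (Bj.card : ℝ) * ((3:ℝ)/8 * (ε * n * D u))
      ≤ (Bj1.card : ℝ) * (((j:ℝ)+1) * (dbar * n)) := by linarith
  have hstep2 : (((j:ℝ)+1) * (dbar * n)) ≤ (1:ℝ)/8 * (ε * n * D u) := by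
    have h1 : ((j:ℝ)+1) * (dbar * n) ≤ (ε * D u / (8 * dbar)) * (dbar * n) := by
      have : (0:ℝ) ≤ dbar * n := by positivity
      nlinarith
    have h2 : (ε * D u / (8 * dbar)) * (dbar * n) = (1:ℝ)/8 * (ε * n * D u) := by
      field_simp
    linarith
  have hBj1nonneg : (0:ℝ) ≤ (Bj1.card : ℝ) := Nat.cast_nonneg _
  have hkey : (Bj.card : ℝ) * ((3:ℝ)/8 * (ε * n * D u))
      ≤ (Bj1.card : ℝ) * ((1:ℝ)/8 * (ε * n * D u)) := by
    calc (Bj.card : ℝ) * ((3:ℝ)/8 * (ε * n * D u))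
        ≤ (Bj1.card : ℝ) * (((j:ℝ)+1) * (dbar * n)) := hstep1
      _ ≤ (Bj1.card : ℝ) * ((1:ℝ)/8 * (ε * n * D u)) :=
          mul_le_mul_of_nonneg_left hstep2 hBj1nonneg
  nlinarith [Nat.cast_nonneg (α := ℝ) Bj.card]

set_option maxHeartbeats 1000000 in
lemma chain_lemma
    (n : ℕ) (D : Fin n → ℕ) (dbar ε : ℝ) (u : Fin n) (J : ℕ)
    (hn : 1 ≤ n)
    (hdbar : 1 ≤ dbar) (hε : 0 < ε) (hε2 : ε ≤ 1/2)
    (hsum : (∑ i, (D i : ℝ)) ≤ dbar * n)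
    (hS1 : ε * n ≤ ∑ v ∈ univ.filter (P1deg n D), (D v : ℝ))
    (hS3 : (∑ v ∈ univ.filter (P3deg n D), (D v : ℝ)) < ε * n / 10)
    (hu : P1deg n D u)
    (hJ1 : (J:ℝ) ≤ ε * D u / (8 * dbar))
    (hJ2 : (J:ℝ) ≤ 2 * (n:ℝ) ^ ((1:ℝ)/6))
    (hL2 : 200 * dbar ≤ ε * (Real.log n) ^ 2)
    (hG1 : (2 * (n:ℝ) ^ ((1:ℝ)/6) + 2) * (n:ℝ) ^ ((4:ℝ)/5) ≤ ε * n / 100)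
    (hG4 : (Real.log n) ^ 2 * (n:ℝ) ^ ((4:ℝ)/5) ≤ ε * n / 100) :
    ∀ i, i ≤ J →
      (((graphsWithDegreeSeq n D).filter (fun G => deg1 n D G u = J - i)).card : ℝ)
        ≤ (1/2)^i * ((graphsWithDegreeSeq n D).card : ℝ) := by
  intro i
  induction i with
  | zero =>
    intro _
    simp only [pow_zero, one_mul, Nat.sub_zero]
    exact_mod_cast Nat.cast_le.mpr (Finset.card_le_card (Finset.filter_subset _ _))
  | succ i ih =>
    intro hi
    have hij : J - i = (J - (i+1)) + 1 := by omega
    have hj1 : ((J - (i+1) : ℕ):ℝ) + 1 ≤ ε * D u / (8 * dbar) := by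
      have h1 : ((J - (i+1) : ℕ):ℝ) + 1 ≤ (J:ℝ) := by
        have : (J - (i+1)) + 1 ≤ J := by omega
        exact_mod_cast this
      linarith
    have hj2 : ((J - (i+1) : ℕ):ℝ) ≤ 2 * (n:ℝ) ^ ((1:ℝ)/6) := by
      have h1 : ((J - (i+1) : ℕ):ℝ) ≤ (J:ℝ) := by
        have : J - (i+1) ≤ J := by omega
        exact_mod_cast this
      linarith
    have hstep := step_lemma n D dbar ε u (J - (i+1)) hn hdbar hε hε2 hsum hS1 hS3 hu
      hj1 hj2 hL2 hG1 hG4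
    rw [← hij] at hstep
    have hih := ih (by omega)
    calc (((graphsWithDegreeSeq n D).filter (fun G => deg1 n D G u = J - (i+1))).card : ℝ)
        ≤ 1/2 * (((graphsWithDegreeSeq n D).filter (fun G => deg1 n D G u = J - i)).card : ℝ) :=
          hstep
      _ ≤ 1/2 * ((1/2)^i * ((graphsWithDegreeSeq n D).card : ℝ)) := by linarith
      _ = (1/2)^(i+1) * ((graphsWithDegreeSeq n D).card : ℝ) := by ring

lemma geom_le_two (m : ℕ) : (∑ t ∈ Finset.range (m+1), ((1:ℝ)/2)^t) ≤ 2 := by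
  rw [geom_sum_eq (by norm_num) (m+1)]
  have h1 : (0:ℝ) ≤ (1/2:ℝ)^(m+1) := by positivity
  have h2 : ((1:ℝ)/2)^(m+1) ≤ 1 := pow_le_one₀ (by norm_num) (by norm_num)
  rw [div_le_iff_of_neg (by norm_num : (1:ℝ)/2 - 1 < 0)]
  linarith

set_option maxHeartbeats 1000000 in
lemma badu_bound
    (n : ℕ) (D : Fin n → ℕ) (dbar ε : ℝ) (u : Fin n) (L : ℕ)
    (hn : 1 ≤ n)
    (hdbar : 1 ≤ dbar) (hε : 0 < ε) (hε2 : ε ≤ 1/2)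
    (hsum : (∑ i, (D i : ℝ)) ≤ dbar * n)
    (hS1 : ε * n ≤ ∑ v ∈ univ.filter (P1deg n D), (D v : ℝ))
    (hS3 : (∑ v ∈ univ.filter (P3deg n D), (D v : ℝ)) < ε * n / 10)
    (hu : P1deg n D u)
    (hLa : (L:ℝ) ≤ ε * (Real.log n) ^ 2 / (16 * dbar))
    (hLb : (L:ℝ) ≤ (n:ℝ) ^ ((1:ℝ)/6))
    (hL2 : 200 * dbar ≤ ε * (Real.log n) ^ 2)
    (hG1 : (2 * (n:ℝ) ^ ((1:ℝ)/6) + 2) * (n:ℝ) ^ ((4:ℝ)/5) ≤ ε * n / 100)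
    (hG4 : (Real.log n) ^ 2 * (n:ℝ) ^ ((4:ℝ)/5) ≤ ε * n / 100) :
    (((graphsWithDegreeSeq n D).filter (fun G =>
        (deg1 n D G u : ℝ) ≤ min (D u : ℝ) ((n:ℝ) ^ ((1:ℝ)/6)) * ε / (16 * dbar))).card : ℝ)
      ≤ (1/2)^L * 2 * ((graphsWithDegreeSeq n D).card : ℝ) := by
  have hP16 : (0:ℝ) ≤ (n:ℝ) ^ ((1:ℝ)/6) := Real.rpow_nonneg (Nat.cast_nonneg n) _
  set ku : ℝ := min (D u : ℝ) ((n:ℝ) ^ ((1:ℝ)/6)) * ε / (16 * dbar) with hkudef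
  have hdbpos : (0:ℝ) < 16 * dbar := by linarith
  have hku0 : 0 ≤ ku := by
    apply div_nonneg _ (le_of_lt hdbpos)
    apply mul_nonneg (le_min (Nat.cast_nonneg _) hP16) (le_of_lt hε)
  set m := ⌊ku⌋₊ with hmdef
  set J := m + L with hJdef
  have hmku : (m:ℝ) ≤ ku := Nat.floor_le hku0
  have hεf : ε / (16 * dbar) ≤ 1 := by
    rw [div_le_one hdbpos]; linarith
  have hkuDu : ku ≤ ε * (D u : ℝ) / (16 * dbar) := by
    rw [hkudef]
    apply div_le_div_of_nonneg_right _ hdbpos.le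
    have := min_le_left (D u : ℝ) ((n:ℝ) ^ ((1:ℝ)/6))
    nlinarith [Nat.cast_nonneg (α := ℝ) (D u)]
  have hkuP16 : ku ≤ (n:ℝ) ^ ((1:ℝ)/6) := by
    rw [hkudef]
    have h1 : min (D u : ℝ) ((n:ℝ) ^ ((1:ℝ)/6)) ≤ (n:ℝ) ^ ((1:ℝ)/6) := min_le_right _ _
    calc min (D u : ℝ) ((n:ℝ) ^ ((1:ℝ)/6)) * ε / (16 * dbar)
        = min (D u : ℝ) ((n:ℝ) ^ ((1:ℝ)/6)) * (ε / (16 * dbar)) := by ring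
      _ ≤ (n:ℝ) ^ ((1:ℝ)/6) * 1 := by
          apply mul_le_mul h1 hεf (by positivity) hP16
      _ = (n:ℝ) ^ ((1:ℝ)/6) := by ring
  have hDuL2 : ((Real.log n)^2 : ℝ) ≤ (D u : ℝ) := hu
  have hJ1 : (J:ℝ) ≤ ε * (D u : ℝ) / (8 * dbar) := by
    have h1 : (J:ℝ) = (m:ℝ) + (L:ℝ) := by push_cast [hJdef]; ring
    have h2 : (L:ℝ) ≤ ε * (D u : ℝ) / (16 * dbar) := by
      calc (L:ℝ) ≤ ε * (Real.log n)^2 / (16 * dbar) := hLa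
        _ ≤ ε * (D u : ℝ) / (16 * dbar) := by
            apply div_le_div_of_nonneg_right _ hdbpos.le
            nlinarith
    have h3 : ε * (D u:ℝ) / (16*dbar) + ε * (D u:ℝ) / (16*dbar) = ε * (D u:ℝ) / (8*dbar) := by
      field_simp; ring
    linarith
  have hJ2 : (J:ℝ) ≤ 2 * (n:ℝ) ^ ((1:ℝ)/6) := by
    have h1 : (J:ℝ) = (m:ℝ) + (L:ℝ) := by push_cast [hJdef]; ring
    linarith
  have hchain := chain_lemma n D dbar ε u J hn hdbar hε hε2 hsum hS1 hS3 hu hJ1 hJ2 hL2 hG1 hG4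
  have hBj : ∀ j, j ≤ m →
      (((graphsWithDegreeSeq n D).filter (fun G => deg1 n D G u = j)).card : ℝ)
        ≤ (1/2)^(J - j) * ((graphsWithDegreeSeq n D).card : ℝ) := by
    intro j hj
    have hjJ : j ≤ J := by omega
    have := hchain (J - j) (by omega)
    rwa [show J - (J - j) = j by omega] at this
  -- the bad set is contained in the union of the B j
  have hsub : (graphsWithDegreeSeq n D).filter (fun G => (deg1 n D G u : ℝ) ≤ ku)
      ⊆ (Finset.range (m+1)).biUnion (fun j =>
          (graphsWithDegreeSeq n D).filter (fun G => deg1 n D G u = j)) := by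
    intro G hG
    simp only [mem_filter] at hG
    have hle : deg1 n D G u ≤ m := Nat.le_floor hG.2
    simp only [Finset.mem_biUnion]
    exact ⟨deg1 n D G u, Finset.mem_range.mpr (by omega), mem_filter.mpr ⟨hG.1, rfl⟩⟩
  have hcard : (((graphsWithDegreeSeq n D).filter
        (fun G => (deg1 n D G u : ℝ) ≤ ku)).card : ℝ)
      ≤ ∑ j ∈ Finset.range (m+1),
          (((graphsWithDegreeSeq n D).filter (fun G => deg1 n D G u = j)).card : ℝ) := by
    have h1 := Finset.card_le_card hsub
    have h2 := Finset.card_biUnion_le (s := Finset.range (m+1))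
      (t := fun j => (graphsWithDegreeSeq n D).filter (fun G => deg1 n D G u = j))
    have := le_trans h1 h2
    exact_mod_cast this
  have hgeom : ∑ j ∈ Finset.range (m+1), ((1:ℝ)/2)^(J - j)
      ≤ (1/2)^L * 2 := by
    have h1 : ∀ j ∈ Finset.range (m+1), ((1:ℝ)/2)^(J - j) = (1/2)^L * (1/2)^(m - j) := by
      intro j hj
      rw [Finset.mem_range] at hj
      rw [show J - j = L + (m - j) by omega, pow_add]
    rw [Finset.sum_congr rfl h1, ← Finset.mul_sum]
    have h2 : ∑ j ∈ Finset.range (m+1), ((1:ℝ)/2)^(m - j)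
        = ∑ j ∈ Finset.range (m+1), ((1:ℝ)/2)^j :=
      Finset.sum_range_reflect (fun t => ((1:ℝ)/2)^t) (m+1)
    rw [h2]
    have h3 := geom_le_two m
    have h4 : (0:ℝ) ≤ (1/2:ℝ)^L := by positivity
    nlinarith
  calc (((graphsWithDegreeSeq n D).filter
        (fun G => (deg1 n D G u : ℝ) ≤ ku)).card : ℝ)
      ≤ ∑ j ∈ Finset.range (m+1),
          (((graphsWithDegreeSeq n D).filter (fun G => deg1 n D G u = j)).card : ℝ) := hcard
    _ ≤ ∑ j ∈ Finset.range (m+1),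
          ((1:ℝ)/2)^(J - j) * ((graphsWithDegreeSeq n D).card : ℝ) := by
        refine Finset.sum_le_sum fun j hj => ?_
        rw [Finset.mem_range] at hj
        exact hBj j (by omega)
    _ = (∑ j ∈ Finset.range (m+1), ((1:ℝ)/2)^(J - j)) * ((graphsWithDegreeSeq n D).card : ℝ) := by
        rw [Finset.sum_mul]
    _ ≤ ((1/2)^L * 2) * ((graphsWithDegreeSeq n D).card : ℝ) := by
        apply mul_le_mul_of_nonneg_right hgeom (Nat.cast_nonneg _)
    _ = (1/2)^L * 2 * ((graphsWithDegreeSeq n D).card : ℝ) := by ring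

open Filter in

lemma exists_n0 (dbar ε δ : ℝ) (hdbar : 1 ≤ dbar) (hε : 0 < ε) (hδ : 0 < δ) (hδ1 : δ < 1) :
    ∃ n₀ : ℕ, ∀ n : ℕ, n₀ ≤ n →
      1 ≤ n ∧
      200 * dbar ≤ ε * (Real.log n) ^ 2 ∧
      (2 * (n:ℝ) ^ ((1:ℝ)/6) + 2) * (n:ℝ) ^ ((4:ℝ)/5) ≤ ε * n / 100 ∧
      (Real.log n) ^ 2 * (n:ℝ) ^ ((4:ℝ)/5) ≤ ε * n / 100 ∧
      ((⌈Real.logb 2 (2 * n / δ)⌉₊ : ℝ) ≤ ε * (Real.log n) ^ 2 / (16 * dbar)) ∧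
      ((⌈Real.logb 2 (2 * n / δ)⌉₊ : ℝ) ≤ (n:ℝ) ^ ((1:ℝ)/6)) := by
  set C : ℝ := 1 / Real.log 2 + |Real.log (2/δ)| / Real.log 2 + 1 with hCdef
  have hlog2 : (0:ℝ) < Real.log 2 := Real.log_pos (by norm_num)
  have hC1 : (1:ℝ) ≤ C := by
    have h1 : 0 ≤ 1 / Real.log 2 := by positivity
    have h2 : 0 ≤ |Real.log (2/δ)| / Real.log 2 := by positivity
    simp only [hCdef]; linarith
  have hCpos : (0:ℝ) < C := by linarith
  -- the ceiling of logb is at most C * log x, eventually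
  have hceil : ∀ᶠ x : ℝ in atTop, (⌈Real.logb 2 (2 * x / δ)⌉₊ : ℝ) ≤ C * Real.log x := by
    filter_upwards [eventually_ge_atTop (1:ℝ),
      Real.tendsto_log_atTop.eventually_ge_atTop (1:ℝ)] with x hx1 ht1
    have hx0 : (0:ℝ) < x := by linarith
    have h2δ : (1:ℝ) ≤ 2 * x / δ := by
      rw [le_div_iff₀ hδ]
      nlinarith
    have hr0 : (0:ℝ) ≤ Real.logb 2 (2 * x / δ) := Real.logb_nonneg (by norm_num) h2δ
    have hceil1 : (⌈Real.logb 2 (2 * x / δ)⌉₊ : ℝ) < Real.logb 2 (2 * x / δ) + 1 :=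
      Nat.ceil_lt_add_one hr0
    have hsplit : Real.log (2 * x / δ) = Real.log x + Real.log (2/δ) := by
      rw [show 2 * x / δ = x * (2/δ) by ring]
      rw [Real.log_mul (by linarith) (by positivity)]
    have hlogb : Real.logb 2 (2 * x / δ) = (Real.log x + Real.log (2/δ)) / Real.log 2 := by
      rw [Real.logb, hsplit]
    have habs : Real.log (2/δ) ≤ |Real.log (2/δ)| := le_abs_self _
    have hb1 : Real.logb 2 (2 * x / δ) ≤ (Real.log x + |Real.log (2/δ)|) / Real.log 2 := by
      rw [hlogb]
      apply div_le_div_of_nonneg_right _ hlog2.le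
      linarith
    have hb2 : (Real.log x + |Real.log (2/δ)|) / Real.log 2
        = Real.log x / Real.log 2 + |Real.log (2/δ)| / Real.log 2 := by ring
    have hb3 : Real.log x / Real.log 2 = (1 / Real.log 2) * Real.log x := by ring
    have hb4 : |Real.log (2/δ)| / Real.log 2 ≤ (|Real.log (2/δ)| / Real.log 2) * Real.log x := by
      nlinarith [mul_nonneg (div_nonneg (abs_nonneg (Real.log (2/δ))) hlog2.le)
        (by linarith : (0:ℝ) ≤ Real.log x - 1)]
    have : (⌈Real.logb 2 (2 * x / δ)⌉₊ : ℝ)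
        ≤ (1 / Real.log 2) * Real.log x + (|Real.log (2/δ)| / Real.log 2) * Real.log x + 1 := by
      rw [hb2, hb3] at hb1
      linarith
    have h1t : (1:ℝ) ≤ 1 * Real.log x := by linarith
    simp only [hCdef]
    nlinarith
  -- (log x)^2 ≤ x^(1/30) eventually
  have hA : ∀ᶠ x : ℝ in atTop, (Real.log x) ^ 2 ≤ x ^ ((1:ℝ)/30) := by
    have h := isLittleO_log_rpow_atTop (by norm_num : (0:ℝ) < 1/60)
    have h2 := Asymptotics.isLittleO_iff.mp h (by norm_num : (0:ℝ) < 1)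
    filter_upwards [h2, eventually_ge_atTop (1:ℝ)] with x hx hx1
    have hx0 : (0:ℝ) < x := by linarith
    have hlog0 : 0 ≤ Real.log x := Real.log_nonneg hx1
    rw [Real.norm_eq_abs, Real.norm_eq_abs, abs_of_nonneg hlog0,
      abs_of_nonneg (Real.rpow_nonneg hx0.le _), one_mul] at hx
    have h3 : (Real.log x) ^ 2 ≤ (x ^ ((1:ℝ)/60)) ^ 2 := by
      nlinarith [Real.rpow_nonneg hx0.le ((1:ℝ)/60)]
    calc (Real.log x) ^ 2 ≤ (x ^ ((1:ℝ)/60)) ^ 2 := h3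
      _ = x ^ ((1:ℝ)/30) := by
          rw [← Real.rpow_natCast (x ^ ((1:ℝ)/60)) 2, ← Real.rpow_mul hx0.le]
          norm_num
  have hpow30 : ∀ K : ℝ, ∀ᶠ x : ℝ in atTop, K ≤ x ^ ((1:ℝ)/30) :=
    fun K => (tendsto_rpow_atTop (by norm_num : (0:ℝ) < 1/30)).eventually_ge_atTop K
  have hpow6 : ∀ K : ℝ, ∀ᶠ x : ℝ in atTop, K ≤ x ^ ((1:ℝ)/6) :=
    fun K => (tendsto_rpow_atTop (by norm_num : (0:ℝ) < 1/6)).eventually_ge_atTop K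
  -- F2
  have hF2 : ∀ᶠ x : ℝ in atTop, 200 * dbar ≤ ε * (Real.log x) ^ 2 := by
    filter_upwards [Real.tendsto_log_atTop.eventually_ge_atTop (max 1 (200 * dbar / ε))]
      with x ht
    have h1 : (1:ℝ) ≤ Real.log x := le_trans (le_max_left _ _) ht
    have h2 : 200 * dbar / ε ≤ Real.log x := le_trans (le_max_right _ _) ht
    have h3 : 200 * dbar ≤ ε * Real.log x := by
      rw [div_le_iff₀ hε] at h2
      linarith [mul_comm ε (Real.log x)]
    nlinarith
  -- F3
  have hF3 : ∀ᶠ x : ℝ in atTop,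
      (2 * x ^ ((1:ℝ)/6) + 2) * x ^ ((4:ℝ)/5) ≤ ε * x / 100 := by
    filter_upwards [eventually_ge_atTop (1:ℝ), hpow30 (400/ε)] with x hx1 hxK
    have hx0 : (0:ℝ) < x := by linarith
    have ha1 : (1:ℝ) ≤ x ^ ((1:ℝ)/6) := by
      calc (1:ℝ) = 1 ^ ((1:ℝ)/6) := (Real.one_rpow _).symm
        _ ≤ x ^ ((1:ℝ)/6) := Real.rpow_le_rpow (by norm_num) hx1 (by norm_num)
    have hb0 : (0:ℝ) ≤ x ^ ((4:ℝ)/5) := Real.rpow_nonneg hx0.le _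
    have hc0 : (0:ℝ) ≤ x ^ ((29:ℝ)/30) := Real.rpow_nonneg hx0.le _
    have hmul : x ^ ((1:ℝ)/6) * x ^ ((4:ℝ)/5) = x ^ ((29:ℝ)/30) := by
      rw [← Real.rpow_add hx0]; norm_num
    have hmul2 : x ^ ((29:ℝ)/30) * x ^ ((1:ℝ)/30) = x := by
      rw [← Real.rpow_add hx0]; norm_num
    have hεx : ε * x / 100 = (ε / 100) * (x ^ ((29:ℝ)/30) * x ^ ((1:ℝ)/30)) := by
      rw [hmul2]; ring
    have hKbound : (ε / 100) * (x ^ ((29:ℝ)/30) * x ^ ((1:ℝ)/30))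
        ≥ (ε / 100) * (x ^ ((29:ℝ)/30) * (400/ε)) := by
      apply mul_le_mul_of_nonneg_left _ (by positivity)
      exact mul_le_mul_of_nonneg_left hxK hc0
    have hfin : (ε / 100) * (x ^ ((29:ℝ)/30) * (400/ε)) = 4 * x ^ ((29:ℝ)/30) := by
      field_simp
      ring
    have hlhs : (2 * x ^ ((1:ℝ)/6) + 2) * x ^ ((4:ℝ)/5) ≤ 4 * x ^ ((29:ℝ)/30) := by
      have h1 : (2 * x ^ ((1:ℝ)/6) + 2) ≤ 4 * x ^ ((1:ℝ)/6) := by linarith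
      calc (2 * x ^ ((1:ℝ)/6) + 2) * x ^ ((4:ℝ)/5)
          ≤ 4 * x ^ ((1:ℝ)/6) * x ^ ((4:ℝ)/5) := mul_le_mul_of_nonneg_right h1 hb0
        _ = 4 * x ^ ((29:ℝ)/30) := by rw [mul_assoc, hmul]
    linarith [hKbound.le, hεx ▸ hKbound]
  -- F4
  have hF4 : ∀ᶠ x : ℝ in atTop,
      (Real.log x) ^ 2 * x ^ ((4:ℝ)/5) ≤ ε * x / 100 := by
    filter_upwards [eventually_ge_atTop (1:ℝ), hA, hpow6 (100/ε)] with x hx1 hAx hxK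
    have hx0 : (0:ℝ) < x := by linarith
    have hb0 : (0:ℝ) ≤ x ^ ((4:ℝ)/5) := Real.rpow_nonneg hx0.le _
    have hc0 : (0:ℝ) ≤ x ^ ((5:ℝ)/6) := Real.rpow_nonneg hx0.le _
    have hmul : x ^ ((1:ℝ)/30) * x ^ ((4:ℝ)/5) = x ^ ((5:ℝ)/6) := by
      rw [← Real.rpow_add hx0]; norm_num
    have hmul2 : x ^ ((5:ℝ)/6) * x ^ ((1:ℝ)/6) = x := by
      rw [← Real.rpow_add hx0]; norm_num
    have hlhs : (Real.log x) ^ 2 * x ^ ((4:ℝ)/5) ≤ x ^ ((5:ℝ)/6) := by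
      calc (Real.log x) ^ 2 * x ^ ((4:ℝ)/5) ≤ x ^ ((1:ℝ)/30) * x ^ ((4:ℝ)/5) :=
            mul_le_mul_of_nonneg_right hAx hb0
        _ = x ^ ((5:ℝ)/6) := hmul
    have hrhs : x ^ ((5:ℝ)/6) * (100/ε) ≤ x ^ ((5:ℝ)/6) * x ^ ((1:ℝ)/6) :=
      mul_le_mul_of_nonneg_left hxK hc0
    rw [hmul2] at hrhs
    have h5 : x ^ ((5:ℝ)/6) = (ε/100) * (x ^ ((5:ℝ)/6) * (100/ε)) := by
      field_simp
    have h6 : x ^ ((5:ℝ)/6) ≤ ε * x / 100 := by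
      calc x ^ ((5:ℝ)/6) = (ε/100) * (x ^ ((5:ℝ)/6) * (100/ε)) := h5
        _ ≤ (ε/100) * x := mul_le_mul_of_nonneg_left hrhs (by positivity)
        _ = ε * x / 100 := by ring
    linarith
  -- F5
  have hF5 : ∀ᶠ x : ℝ in atTop,
      (⌈Real.logb 2 (2 * x / δ)⌉₊ : ℝ) ≤ ε * (Real.log x) ^ 2 / (16 * dbar) := by
    filter_upwards [hceil,
      Real.tendsto_log_atTop.eventually_ge_atTop (max 1 (C * (16 * dbar) / ε))] with x hcx ht
    have ht1 : (1:ℝ) ≤ Real.log x := le_trans (le_max_left _ _) ht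
    have ht2 : C * (16 * dbar) / ε ≤ Real.log x := le_trans (le_max_right _ _) ht
    have hd : (0:ℝ) < 16 * dbar := by linarith
    have key : C * Real.log x ≤ ε * (Real.log x) ^ 2 / (16 * dbar) := by
      rw [le_div_iff₀ hd]
      rw [div_le_iff₀ hε] at ht2
      nlinarith
    linarith
  -- F6
  have hF6 : ∀ᶠ x : ℝ in atTop,
      (⌈Real.logb 2 (2 * x / δ)⌉₊ : ℝ) ≤ x ^ ((1:ℝ)/6) := by
    have h := isLittleO_log_rpow_atTop (by norm_num : (0:ℝ) < 1/6)
    have h2 := Asymptotics.isLittleO_iff.mp h (by positivity : (0:ℝ) < 1/C)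
    filter_upwards [hceil, h2, eventually_ge_atTop (1:ℝ)] with x hcx hx hx1
    have hx0 : (0:ℝ) < x := by linarith
    have hlog0 : 0 ≤ Real.log x := Real.log_nonneg hx1
    rw [Real.norm_eq_abs, Real.norm_eq_abs, abs_of_nonneg hlog0,
      abs_of_nonneg (Real.rpow_nonneg hx0.le _)] at hx
    have : C * Real.log x ≤ C * (1/C * x ^ ((1:ℝ)/6)) :=
      mul_le_mul_of_nonneg_left hx hCpos.le
    have hCC : C * (1/C * x ^ ((1:ℝ)/6)) = x ^ ((1:ℝ)/6) := by
      field_simp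
    linarith
  -- combine
  have hall : ∀ᶠ x : ℝ in atTop, ((1:ℝ) ≤ x ∧
      200 * dbar ≤ ε * (Real.log x) ^ 2 ∧
      (2 * x ^ ((1:ℝ)/6) + 2) * x ^ ((4:ℝ)/5) ≤ ε * x / 100 ∧
      (Real.log x) ^ 2 * x ^ ((4:ℝ)/5) ≤ ε * x / 100 ∧
      ((⌈Real.logb 2 (2 * x / δ)⌉₊ : ℝ) ≤ ε * (Real.log x) ^ 2 / (16 * dbar)) ∧
      ((⌈Real.logb 2 (2 * x / δ)⌉₊ : ℝ) ≤ x ^ ((1:ℝ)/6))) := by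
    filter_upwards [eventually_ge_atTop (1:ℝ), hF2, hF3, hF4, hF5, hF6] with x h1 h2 h3 h4 h5 h6
    exact ⟨h1, h2, h3, h4, h5, h6⟩
  have hnat := tendsto_natCast_atTop_atTop.eventually hall
  obtain ⟨n₀, hn₀⟩ := eventually_atTop.mp hnat
  refine ⟨n₀, fun n hn => ?_⟩
  obtain ⟨h1, h2, h3, h4, h5, h6⟩ := hn₀ n hn
  exact ⟨by exact_mod_cast h1, h2, h3, h4, h5, h6⟩

set_option maxHeartbeats 2000000 in
/-- **Lemma (large minimum degree inside `S₁`).**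
If `S₁ = {u : d(u) ≥ (log n)²}` carries total degree at least `εn` while
`S₃ = {u : d(u) ≥ n^{4/5}}` carries total degree less than `εn/10`, then with probability
at least `1-δ` every `u ∈ S₁` has more than `min{d(u), n^{1/6}}·ε/(16d̄)` neighbours
inside `S₁`. -/
theorem min_degree_in_S1_large :
    ∀ dbar : ℝ, 1 ≤ dbar →
    ∃ ε₀ : ℝ, 0 < ε₀ ∧ ε₀ < 1 ∧
    ∀ ε : ℝ, 0 < ε → ε ≤ ε₀ → ∀ δ : ℝ, 0 < δ → δ < 1 →
    ∃ n₀ : ℕ, ∀ n : ℕ, n₀ ≤ n →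
    ∀ D : Fin n → ℕ, (∀ w, 1 ≤ D w) →
    (graphsWithDegreeSeq n D).Nonempty →
    (∑ i, (D i : ℝ)) ≤ dbar * n →
    ε * n ≤ (∑ u ∈ Finset.univ.filter
        (fun u : Fin n => (Real.log n) ^ 2 ≤ (D u : ℝ)), (D u : ℝ)) →
    (∑ u ∈ Finset.univ.filter
        (fun u : Fin n => (n : ℝ) ^ ((4 : ℝ) / 5) ≤ (D u : ℝ)), (D u : ℝ)) < ε * n / 10 →
    uniformProb n D (fun G => ∃ u : Fin n,
        (Real.log n) ^ 2 ≤ (D u : ℝ) ∧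
        (((Finset.univ.filter (fun w : Fin n =>
            (Real.log n) ^ 2 ≤ (D w : ℝ) ∧ G.Adj u w)).card : ℝ)
          ≤ min (D u : ℝ) ((n : ℝ) ^ ((1 : ℝ) / 6)) * ε / (16 * dbar)))
      ≤ δ := by
  intro dbar hdbar
  refine ⟨1/2, by norm_num, by norm_num, ?_⟩
  intro ε hε hεh δ hδ hδ1
  obtain ⟨n₀, hn₀⟩ := exists_n0 dbar ε δ hdbar hε hδ hδ1
  refine ⟨n₀, ?_⟩
  intro n hn D hD1 hne hsum hS1 hS3
  obtain ⟨hn1, hF2, hF3, hF4, hF5, hF6⟩ := hn₀ n hn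
  set L := ⌈Real.logb 2 (2 * n / δ)⌉₊ with hLdef
  have hnR : (1:ℝ) ≤ (n:ℝ) := by exact_mod_cast hn1
  have hΩpos : (0:ℝ) < ((graphsWithDegreeSeq n D).card : ℝ) := by
    have := Finset.card_pos.mpr hne
    exact_mod_cast this
  -- convert the filters
  have hS1' : ε * n ≤ ∑ v ∈ univ.filter (P1deg n D), (D v : ℝ) := hS1
  have hS3' : (∑ v ∈ univ.filter (P3deg n D), (D v : ℝ)) < ε * n / 10 := hS3
  -- the power of 2 bound
  have h2L : 2 * (n:ℝ) / δ ≤ 2 ^ L := by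
    have h1 : Real.logb 2 (2 * n / δ) ≤ (L : ℝ) := Nat.le_ceil _
    have hx0 : (0:ℝ) < 2 * n / δ := by positivity
    calc 2 * (n:ℝ) / δ = (2:ℝ) ^ (Real.logb 2 (2 * n / δ)) :=
          (Real.rpow_logb (by norm_num) (by norm_num) hx0).symm
      _ ≤ (2:ℝ) ^ ((L:ℕ):ℝ) :=
          Real.rpow_le_rpow_of_exponent_le (by norm_num) h1
      _ = 2 ^ L := by
          rw [Real.rpow_natCast]
  have hfinal2L : ((1:ℝ)/2) ^ L * 2 * (n:ℝ) ≤ δ := by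
    have h2pos : (0:ℝ) < 2 ^ L := by positivity
    have h1 : 2 * (n:ℝ) ≤ δ * 2 ^ L := by
      rw [div_le_iff₀ hδ] at h2L
      linarith [h2L]
    have h2 : ((1:ℝ)/2) ^ L = 1 / 2 ^ L := by
      rw [div_pow, one_pow]
    rw [h2]
    rw [show (1:ℝ) / 2 ^ L * 2 * (n:ℝ) = (2 * n) / 2 ^ L by ring, div_le_iff₀ h2pos]
    nlinarith
  -- bad sets per vertex
  set Bad : Fin n → Finset (SimpleGraph (Fin n)) := fun u =>
    (graphsWithDegreeSeq n D).filter (fun G =>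
      (deg1 n D G u : ℝ) ≤ min (D u : ℝ) ((n:ℝ) ^ ((1:ℝ)/6)) * ε / (16 * dbar)) with hBaddef
  have hbadu : ∀ u ∈ univ.filter (P1deg n D),
      ((Bad u).card : ℝ) ≤ (1/2)^L * 2 * ((graphsWithDegreeSeq n D).card : ℝ) := by
    intro u hu
    simp only [mem_filter, mem_univ, true_and] at hu
    exact badu_bound n D dbar ε u L hn1 hdbar hε hεh hsum hS1' hS3' hu hF5 hF6 hF2 hF3 hF4
  -- key estimate for any event implying some bad vertex
  have key : ∀ P : SimpleGraph (Fin n) → Prop,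
      (∀ G, P G → ∃ u : Fin n, P1deg n D u ∧
        (deg1 n D G u : ℝ) ≤ min (D u : ℝ) ((n:ℝ) ^ ((1:ℝ)/6)) * ε / (16 * dbar)) →
      ((((graphsWithDegreeSeq n D).filter P).card : ℝ))
        ≤ ((1:ℝ)/2)^L * 2 * (n:ℝ) * ((graphsWithDegreeSeq n D).card : ℝ) := by
    intro P hP
    have hsub : (graphsWithDegreeSeq n D).filter P ⊆ (univ.filter (P1deg n D)).biUnion Bad := by
      intro G hG
      rw [mem_filter] at hG
      obtain ⟨u, hu1, hu2⟩ := hP G hG.2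
      rw [Finset.mem_biUnion]
      refine ⟨u, by simp only [mem_filter, mem_univ, true_and]; exact hu1, ?_⟩
      rw [hBaddef, mem_filter]
      exact ⟨hG.1, hu2⟩
    have hcard1 : ((((graphsWithDegreeSeq n D).filter P).card : ℕ) : ℝ)
        ≤ ∑ u ∈ univ.filter (P1deg n D), ((Bad u).card : ℝ) := by
      have h1 := Finset.card_le_card hsub
      have h2 := Finset.card_biUnion_le (s := univ.filter (P1deg n D)) (t := Bad)
      have h3 := le_trans h1 h2
      calc ((((graphsWithDegreeSeq n D).filter P).card : ℕ) : ℝ)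
          ≤ ((∑ u ∈ univ.filter (P1deg n D), (Bad u).card : ℕ) : ℝ) := by exact_mod_cast h3
        _ = ∑ u ∈ univ.filter (P1deg n D), ((Bad u).card : ℝ) := by push_cast; rfl
    have h1 : (∑ u ∈ univ.filter (P1deg n D), ((Bad u).card : ℝ))
        ≤ ∑ _u ∈ univ.filter (P1deg n D),
            ((1:ℝ)/2)^L * 2 * ((graphsWithDegreeSeq n D).card : ℝ) :=
      Finset.sum_le_sum hbadu
    have h2 : (∑ _u ∈ univ.filter (P1deg n D),
        ((1:ℝ)/2)^L * 2 * ((graphsWithDegreeSeq n D).card : ℝ))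
        = ((univ.filter (P1deg n D)).card : ℝ)
          * (((1:ℝ)/2)^L * 2 * ((graphsWithDegreeSeq n D).card : ℝ)) := by
      rw [Finset.sum_const, nsmul_eq_mul]
    have h3 : ((univ.filter (P1deg n D)).card : ℝ) ≤ (n:ℝ) := by
      have h4 : (univ.filter (P1deg n D)).card ≤ n := by
        calc (univ.filter (P1deg n D)).card ≤ (univ : Finset (Fin n)).card :=
              Finset.card_le_card (Finset.filter_subset _ _)
          _ = n := by rw [Finset.card_univ, Fintype.card_fin]
      exact_mod_cast h4
    have h4 : (0:ℝ) ≤ ((1:ℝ)/2)^L * 2 * ((graphsWithDegreeSeq n D).card : ℝ) := by positivity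
    calc ((((graphsWithDegreeSeq n D).filter P).card : ℕ) : ℝ)
        ≤ ∑ u ∈ univ.filter (P1deg n D), ((Bad u).card : ℝ) := hcard1
      _ ≤ ∑ _u ∈ univ.filter (P1deg n D),
            ((1:ℝ)/2)^L * 2 * ((graphsWithDegreeSeq n D).card : ℝ) := h1
      _ = ((univ.filter (P1deg n D)).card : ℝ)
          * (((1:ℝ)/2)^L * 2 * ((graphsWithDegreeSeq n D).card : ℝ)) := h2
      _ ≤ (n:ℝ) * (((1:ℝ)/2)^L * 2 * ((graphsWithDegreeSeq n D).card : ℝ)) :=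
          mul_le_mul_of_nonneg_right h3 h4
      _ = ((1:ℝ)/2)^L * 2 * (n:ℝ) * ((graphsWithDegreeSeq n D).card : ℝ) := by ring
  rw [uniformProb, div_le_iff₀ hΩpos]
  refine le_trans (key _ ?_) ?_
  · rintro G ⟨u, hu1, hu2⟩
    exact ⟨u, hu1, hu2⟩
  · exact mul_le_mul_of_nonneg_right hfinal2L hΩpos.le
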